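/- For all real numbers u, v ≥ 0 and r ≥ 2 with 1/r + 1/r' = 1, one has u·v ≤ u^r/r + v^{r'}/r' − (1/r)·|u − v^{1/(r−1)}|^r. -/

import Mathlib

open Real NNReal

lemma superadd (a b p : ℝ) (ha : 0 ≤ a) (hb : 0 ≤ b) (hp : 1 ≤ p) :
    a ^ p + b ^ p ≤ (a + b) ^ p := by
  have h := NNReal.add_rpow_le_rpow_add (⟨a, ha⟩ : ℝ≥0) (⟨b, hb⟩ : ℝ≥0) hp
  have h2 := (NNReal.coe_le_coe).2 h
  exact h2

lemma key_ineq (u w r : ℝ) (hu : 0 ≤ u) (hw : 0 ≤ w) (hr : 2 ≤ r) :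
    r * (u * w ^ (r - 1)) + |u - w| ^ r ≤ u ^ r + (r - 1) * w ^ r := by
  have hr1 : (1 : ℝ) ≤ r := by linarith
  have hr1' : (1 : ℝ) ≤ r - 1 := by linarith
  rcases le_or_gt w u with hle | hlt
  · -- case u ≥ w
    set F : ℝ → ℝ := fun x => x ^ r - (x - w) ^ r - r * (x * w ^ (r - 1)) + (r - 1) * w ^ r
      with hF
    have hderiv : ∀ x : ℝ, HasDerivAt F
        (r * x ^ (r - 1) - r * (x - w) ^ (r - 1) - r * w ^ (r - 1)) x := by
      intro x
      have h1 : HasDerivAt (fun x : ℝ => x ^ r) (r * x ^ (r - 1)) x :=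
        Real.hasDerivAt_rpow_const (Or.inr hr1)
      have h2 : HasDerivAt (fun x : ℝ => (x - w) ^ r) (r * (x - w) ^ (r - 1)) x := by
        have := (Real.hasDerivAt_rpow_const (x := x - w) (p := r) (Or.inr hr1)).comp x
          ((hasDerivAt_id x).sub_const w)
        simpa [Function.comp_def] using this
      have h3 : HasDerivAt (fun x : ℝ => r * (x * w ^ (r - 1))) (r * w ^ (r - 1)) x := by
        simpa [mul_comm, mul_assoc] using
          (((hasDerivAt_id x).mul_const (w ^ (r - 1))).const_mul r)
      exact ((h1.sub h2).sub h3).add_const ((r - 1) * w ^ r)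
    have hmono : MonotoneOn F (Set.Ici w) := by
      apply monotoneOn_of_deriv_nonneg (convex_Ici w)
      · exact fun x _ => (hderiv x).continuousAt.continuousWithinAt
      · exact fun x _ => ((hderiv x).differentiableAt).differentiableWithinAt
      · intro x hx
        rw [interior_Ici] at hx
        rw [(hderiv x).deriv]
        have hxw : 0 ≤ x - w := by simp at hx; linarith
        have hs := superadd (x - w) w (r - 1) hxw hw hr1'
        have : (x - w) + w = x := by ring
        rw [this] at hs
        nlinarith [hs]
    have h0 : F w = 0 := by
      simp only [hF, sub_self]
      rw [Real.zero_rpow (by positivity)]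
      have : w ^ r = w * w ^ (r - 1) := by
        rw [← Real.rpow_one_add' hw (by positivity)]; ring_nf
      rw [this]; ring
    have := hmono (Set.self_mem_Ici) (Set.mem_Ici.2 hle) hle
    rw [h0] at this
    have habs : |u - w| = u - w := abs_of_nonneg (by linarith)
    rw [habs]
    simp only [hF] at this
    linarith
  · -- case u < w, so w > 0
    set G : ℝ → ℝ := fun x => x ^ r + (r - 1) * w ^ r - (w - x) ^ r - r * (x * w ^ (r - 1))
      with hG
    have hderiv : ∀ x : ℝ, HasDerivAt G
        (r * x ^ (r - 1) + r * (w - x) ^ (r - 1) - r * w ^ (r - 1)) x := by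
      intro x
      have h1 : HasDerivAt (fun x : ℝ => x ^ r) (r * x ^ (r - 1)) x :=
        Real.hasDerivAt_rpow_const (Or.inr hr1)
      have h2 : HasDerivAt (fun x : ℝ => (w - x) ^ r) (-(r * (w - x) ^ (r - 1))) x := by
        have := (Real.hasDerivAt_rpow_const (x := w - x) (p := r) (Or.inr hr1)).comp x
          ((hasDerivAt_id x).const_sub w)
        simpa [mul_comm, Function.comp_def] using this
      have h3 : HasDerivAt (fun x : ℝ => r * (x * w ^ (r - 1))) (r * w ^ (r - 1)) x := by
        simpa [mul_comm, mul_assoc] using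
          (((hasDerivAt_id x).mul_const (w ^ (r - 1))).const_mul r)
      have := ((h1.add_const ((r - 1) * w ^ r)).sub h2).sub h3
      refine this.congr_deriv ?_
      ring
    have hanti : AntitoneOn G (Set.Icc 0 w) := by
      apply antitoneOn_of_deriv_nonpos (convex_Icc 0 w)
      · exact fun x _ => (hderiv x).continuousAt.continuousWithinAt
      · exact fun x _ => ((hderiv x).differentiableAt).differentiableWithinAt
      · intro x hx
        rw [interior_Icc] at hx
        rw [(hderiv x).deriv]
        obtain ⟨hx0, hxw⟩ := hx
        have hs := superadd x (w - x) (r - 1) (le_of_lt hx0) (by linarith) hr1'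
        have : x + (w - x) = w := by ring
        rw [this] at hs
        nlinarith [hs]
    have h0 : G w = 0 := by
      simp only [hG, sub_self]
      rw [Real.zero_rpow (by positivity)]
      have : w ^ r = w * w ^ (r - 1) := by
        rw [← Real.rpow_one_add' hw (by positivity)]; ring_nf
      rw [this]; ring
    have := hanti (Set.mem_Icc.2 ⟨hu, hlt.le⟩) (Set.mem_Icc.2 ⟨hw, le_refl w⟩) hlt.le
    rw [h0] at this
    have habs : |u - w| = w - u := by rw [abs_sub_comm]; exact abs_of_nonneg (by linarith)
    rw [habs]
    simp only [hG] at this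
    linarith

/-- Quantitative Young inequality (Cianchi). -/
theorem quantitative_young (u v r r' : ℝ)
    (hu : 0 ≤ u) (hv : 0 ≤ v) (hr : 2 ≤ r) (hconj : 1 / r + 1 / r' = 1) :
    u * v ≤ u ^ r / r + v ^ r' / r' - (1 / r) * |u - v ^ (1 / (r - 1))| ^ r := by
  have hrpos : (0 : ℝ) < r := by linarith
  have hr1 : (0 : ℝ) < r - 1 := by linarith
  have hr'ne : r' ≠ 0 := by
    intro h
    rw [h, div_zero, add_zero] at hconj
    have : r = 1 := by field_simp at hconj; linarith
    linarith
  have hinv : 1 / r' = (r - 1) / r := by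
    field_simp at hconj ⊢; linarith
  set w : ℝ := v ^ (1 / (r - 1)) with hwdef
  have hw : 0 ≤ w := Real.rpow_nonneg hv _
  have hwv : w ^ (r - 1) = v := by
    rw [hwdef, ← Real.rpow_mul hv, one_div, inv_mul_cancel₀ (ne_of_gt hr1), Real.rpow_one]
  have hr'eq : r' = r / (r - 1) := by
    rw [eq_div_iff (ne_of_gt hr1)]
    have h2 : 1 / r' * (r' * r) = (r - 1) / r * (r' * r) := by rw [hinv]
    field_simp at h2
    have h3 : r * r = ((r - 1) * r') * r := by linear_combination r * h2
    have h4 := mul_right_cancel₀ (ne_of_gt hrpos) h3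
    linear_combination -h4
  have hwr' : w ^ r = v ^ r' := by
    rw [hwdef, ← Real.rpow_mul hv, hr'eq, one_div, inv_mul_eq_div]
  have hv' : v ^ r' / r' = (r - 1) * w ^ r / r := by
    rw [div_eq_mul_inv, ← one_div, hinv, ← hwr']
    ring
  have key := key_ineq u w r hu hw hr
  rw [hv', ← hwv]
  have hgoal : u ^ r / r + (r - 1) * w ^ r / r - 1 / r * |u - w| ^ r
      = (u ^ r + (r - 1) * w ^ r - |u - w| ^ r) / r := by ring
  rw [hgoal, le_div_iff₀ hrpos]
  linarith
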